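/- Let \(V = \{v_0,\dots,v_d\} \subset \mathbb{S}^{d-1}\) be points in general position whose Voronoi cells on the sphere tile \(\mathbb{S}^{d-1}\). Then each Voronoi cell is a spherical simplex (an intersection of \(d\) hemispheres), and the faces of these cells correspond bijectively to nonempty subsets \(Q \subseteq V\), with the face for \(Q\) being the set of points of the corresponding cell equidistant from all points of \(Q\); moreover the intersection of two such faces is again such a face. -/
import Mathlib


open Metric Set
open scoped RealInnerProductSpace

/-- The spherical Voronoi cell of the vertex `v i`. -/
def vorCell {d : ℕ} (v : Fin (d + 1) → EuclideanSpace ℝ (Fin d)) (i : Fin (d + 1)) :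
    Set (EuclideanSpace ℝ (Fin d)) :=
  {u | ‖u‖ = 1 ∧ ∀ j, ⟪u, v j⟫ ≤ ⟪u, v i⟫}

/-- The face of the spherical Voronoi diagram corresponding to a set `Q` of vertices:
the points of the sphere lying in the cells of all the vertices in `Q` (equivalently,
the points of those cells equidistant from all the points of `Q`). -/
def vorFace {d : ℕ} (v : Fin (d + 1) → EuclideanSpace ℝ (Fin d)) (Q : Finset (Fin (d + 1))) :
    Set (EuclideanSpace ℝ (Fin d)) :=
  {u | ‖u‖ = 1 ∧ ∀ i ∈ Q, ∀ j, ⟪u, v j⟫ ≤ ⟪u, v i⟫}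

lemma vor_witness {d : ℕ} (v : Fin (d + 1) → EuclideanSpace ℝ (Fin d))
    (hindep : AffineIndependent ℝ v) (Q : Finset (Fin (d + 1))) (i0 : Fin (d + 1))
    (hi0 : i0 ∈ Q) (hne : Q ≠ Finset.univ) :
    ∃ w, w ∈ vorFace v Q ∧ ∀ j ∉ Q, ⟪w, v j⟫ < ⟪w, v i0⟫ := by
  classical
  set b : {j : Fin (d + 1) // j ≠ i0} → EuclideanSpace ℝ (Fin d) := fun j => v j - v i0 with hbdef
  have hb : LinearIndependent ℝ b := by
    have := (affineIndependent_iff_linearIndependent_vsub ℝ v i0).mp hindep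
    simpa [hbdef, vsub_eq_sub] using this
  have hcard : Fintype.card {j : Fin (d + 1) // j ≠ i0} = d := by
    simp [Fintype.card_subtype_compl]
  have hsp : Submodule.span ℝ (Set.range b) = ⊤ := by
    apply Submodule.eq_top_of_finrank_eq
    rw [finrank_span_eq_card hb, hcard, finrank_euclideanSpace_fin]
  set T : EuclideanSpace ℝ (Fin d) →ₗ[ℝ] ({j : Fin (d + 1) // j ≠ i0} → ℝ) :=
    LinearMap.pi (fun j => (innerSL ℝ (b j)).toLinearMap) with hTdef
  have hTinj : Function.Injective T := by
    rw [← LinearMap.ker_eq_bot]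
    rw [Submodule.eq_bot_iff]
    intro u hu
    have h1 : ∀ j, ⟪b j, u⟫ = 0 := fun j => congrFun hu j
    have h2 : u ∈ (Submodule.span ℝ (Set.range b))ᗮ := by
      rw [Submodule.mem_orthogonal]
      intro x hx
      induction hx using Submodule.span_induction with
      | mem x hx => obtain ⟨j, rfl⟩ := hx; exact h1 j
      | zero => simp
      | add x y _ _ hx hy => rw [inner_add_left, hx, hy, add_zero]
      | smul c x _ hx => rw [real_inner_smul_left, hx, mul_zero]
    rw [hsp, Submodule.top_orthogonal_eq_bot, Submodule.mem_bot] at h2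
    exact h2
  have hTsurj : Function.Surjective T := by
    rwa [← LinearMap.injective_iff_surjective_of_finrank_eq_finrank
      (by rw [finrank_euclideanSpace_fin, Module.finrank_pi, hcard])]
  obtain ⟨u, hu⟩ := hTsurj (fun j => if (j : Fin (d + 1)) ∈ Q then 0 else -1)
  have hvals : ∀ j : {j : Fin (d + 1) // j ≠ i0},
      ⟪b j, u⟫ = if (j : Fin (d + 1)) ∈ Q then 0 else -1 := fun j => congrFun hu j
  obtain ⟨j1, hj1⟩ : ∃ j, j ∉ Q := by
    by_contra h
    push_neg at h
    exact hne (Finset.eq_univ_iff_forall.mpr h)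
  have hj1ne : j1 ≠ i0 := fun h => hj1 (h ▸ hi0)
  have hune : u ≠ 0 := by
    intro h
    have := hvals ⟨j1, hj1ne⟩
    simp [h, hj1] at this
  have hnorm : 0 < ‖u‖ := norm_pos_iff.mpr hune
  set c : ℝ := ‖u‖⁻¹ with hc
  have hcpos : 0 < c := inv_pos.mpr hnorm
  set w : EuclideanSpace ℝ (Fin d) := c • u with hw
  have hwkey : ∀ j : Fin (d + 1),
      ⟪w, v j⟫ = ⟪w, v i0⟫ + c * (if j ∈ Q then 0 else -1) := by
    intro j
    by_cases hji : j = i0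
    · simp [hji, hi0]
    · have := hvals ⟨j, hji⟩
      have h2 : ⟪w, v j - v i0⟫ = c * (if j ∈ Q then 0 else -1) := by
        rw [hw, real_inner_smul_left, ← real_inner_comm]
        exact congrArg (c * ·) this
      rw [inner_sub_right] at h2
      linarith
  refine ⟨w, ⟨?_, ?_⟩, ?_⟩
  · rw [hw, norm_smul, hc, Real.norm_eq_abs, abs_of_pos (inv_pos.mpr hnorm),
      inv_mul_cancel₀ (ne_of_gt hnorm)]
  · intro i hi j
    rw [hwkey j, hwkey i, if_pos hi]
    by_cases hjq : j ∈ Q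
    · rw [if_pos hjq]
    · rw [if_neg hjq]; nlinarith
  · intro j hj
    rw [hwkey j, if_neg hj]
    nlinarith

/-- For points `v 0, …, v d ∈ 𝕊^{d-1}` in general position (affinely independent, with the
origin interior to their convex hull), the Voronoi cells are spherical simplices (each is
the intersection of the sphere with `d` hemispheres), the faces correspond bijectively to
the nonempty subsets `Q` of the vertex set — each face consisting of the points of the
corresponding cells equidistant from all points of `Q` — and the intersection of two faces
is again a face (the faces form a simplicial complex). -/
theorem voronoi_cells_simplicial_complex {d : ℕ} (hd : 1 ≤ d)
    (v : Fin (d + 1) → EuclideanSpace ℝ (Fin d))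
    (hv : ∀ i, ‖v i‖ = 1) (hindep : AffineIndependent ℝ v)
    (h0 : (0 : EuclideanSpace ℝ (Fin d)) ∈ interior (convexHull ℝ (Set.range v))) :
    (∀ i, vorCell v i =
        sphere (0 : EuclideanSpace ℝ (Fin d)) 1 ∩
          ⋂ j ∈ {j | j ≠ i}, {u | ⟪u, v j - v i⟫ ≤ 0}) ∧
    (∀ Q Q' : Finset (Fin (d + 1)), Q.Nonempty → Q'.Nonempty →
      vorFace v Q = vorFace v Q' → Q = Q') ∧
    (∀ Q Q' : Finset (Fin (d + 1)),
      vorFace v Q ∩ vorFace v Q' = vorFace v (Q ∪ Q')) ∧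
    (∀ Q : Finset (Fin (d + 1)), ∀ u ∈ vorFace v Q,
      (∀ i ∈ Q, u ∈ vorCell v i) ∧ ∀ i ∈ Q, ∀ j ∈ Q, dist u (v i) = dist u (v j)) := by
  refine ⟨?_, ?_, ?_, ?_⟩
  · intro i
    ext u
    simp only [vorCell, Set.mem_setOf_eq, Set.mem_inter_iff, mem_sphere_zero_iff_norm,
      Set.mem_iInter, inner_sub_right]
    constructor
    · rintro ⟨h1, h2⟩
      exact ⟨h1, fun j _ => by linarith [h2 j]⟩
    · rintro ⟨h1, h2⟩
      refine ⟨h1, fun j => ?_⟩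
      by_cases hj : j = i
      · simp [hj]
      · linarith [h2 j hj]
  · intro Q Q' hQ hQ' heq
    have key : ∀ A B : Finset (Fin (d + 1)), A.Nonempty →
        vorFace v A = vorFace v B → B ⊆ A := by
      intro A B hA hAB
      by_cases hAu : A = Finset.univ
      · exact hAu ▸ B.subset_univ
      · obtain ⟨i0, hi0⟩ := hA
        obtain ⟨w, hwF, hwstrict⟩ := vor_witness v hindep A i0 hi0 hAu
        intro i' hi'
        by_contra hi'A
        have hw' : w ∈ vorFace v B := hAB ▸ hwF
        have hle : ⟪w, v i0⟫ ≤ ⟪w, v i'⟫ := hw'.2 i' hi' i0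
        have hlt : ⟪w, v i'⟫ < ⟪w, v i0⟫ := hwstrict i' hi'A
        linarith
    exact Finset.Subset.antisymm (key Q' Q hQ' heq.symm) (key Q Q' hQ heq)
  · intro Q Q'
    ext u
    simp only [vorFace, Set.mem_inter_iff, Set.mem_setOf_eq, Finset.mem_union]
    constructor
    · rintro ⟨⟨h1, h2⟩, ⟨_, h3⟩⟩
      exact ⟨h1, fun i hi => hi.elim (h2 i) (h3 i)⟩
    · rintro ⟨h1, h2⟩
      exact ⟨⟨h1, fun i hi => h2 i (Or.inl hi)⟩, ⟨h1, fun i hi => h2 i (Or.inr hi)⟩⟩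
  · rintro Q u ⟨h1, h2⟩
    refine ⟨fun i hi => ⟨h1, h2 i hi⟩, fun i hi j hj => ?_⟩
    have hij : ⟪u, v i⟫ = ⟪u, v j⟫ := le_antisymm (h2 j hj i) (h2 i hi j)
    have e1 : dist u (v i) ^ 2 = dist u (v j) ^ 2 := by
      rw [dist_eq_norm, dist_eq_norm, norm_sub_sq_real, norm_sub_sq_real, hv i, hv j, hij]
    calc dist u (v i) = Real.sqrt (dist u (v i) ^ 2) := (Real.sqrt_sq dist_nonneg).symm
      _ = Real.sqrt (dist u (v j) ^ 2) := by rw [e1]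
      _ = dist u (v j) := Real.sqrt_sq dist_nonneg
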